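/- Let A₁ = ℚ[x, y, z], A₂ = ℚ[a, b, c, d], B = ℚ[x, y], and let π₁ : A₁ → B be the ℚ-algebra homomorphism with x ↦ x, y ↦ y, z ↦ 0, and π₂ : A₂ → B the ℚ-algebra homomorphism with a ↦ x, b ↦ 2y − x², c ↦ y, d ↦ −y(x² − 4y). Then the fiber product A = A₁ ×_B A₂ (taken along π₁ and π₂) is generated as a ℚ-algebra by the five elements (x, a), (y, c), (z, 0), (2y − x², b), and (−y(x² − 4y), d). -/

import Mathlib

open MvPolynomial

set_option maxHeartbeats 1000000

namespace Stmt9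

/-- `A₁ = ℚ[x, y, z]` with `x = X 0`, `y = X 1`, `z = X 2`. -/
abbrev A1 : Type := MvPolynomial (Fin 3) ℚ

/-- `A₂ = ℚ[a, b, c, d]` with `a = X 0`, `b = X 1`, `c = X 2`, `d = X 3`. -/
abbrev A2 : Type := MvPolynomial (Fin 4) ℚ

/-- `B = ℚ[x, y]` with `x = X 0`, `y = X 1`. -/
abbrev B : Type := MvPolynomial (Fin 2) ℚ

/-- `π₁ : A₁ → B`, `x ↦ x`, `y ↦ y`, `z ↦ 0`. -/
noncomputable def π₁ : A1 →ₐ[ℚ] B := aeval ![X 0, X 1, 0]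

/-- `π₂ : A₂ → B`, `a ↦ x`, `b ↦ 2y − x²`, `c ↦ y`, `d ↦ −y(x² − 4y)`. -/
noncomputable def π₂ : A2 →ₐ[ℚ] B :=
  aeval ![X 0, 2 * X 1 - X 0 ^ 2, X 1, -X 1 * (X 0 ^ 2 - 4 * X 1)]

@[simp] lemma fst_apply' (x : A1 × A2) : AlgHom.fst ℚ A1 A2 x = x.1 := rfl
@[simp] lemma snd_apply' (x : A1 × A2) : AlgHom.snd ℚ A1 A2 x = x.2 := rfl

noncomputable def τ₁ : A1 →ₐ[ℚ] A1 × A2 :=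
  aeval ![(X 0, X 0), (X 1, X 2), (X 2, 0)]

/-- section `A2 → A1 × A2`. -/
noncomputable def τ₂ : A2 →ₐ[ℚ] A1 × A2 :=
  aeval ![(X 0, X 0), (2 * X 1 - X 0 ^ 2, X 1), (X 1, X 2),
    (-X 1 * (X 0 ^ 2 - 4 * X 1), X 3)]

noncomputable def ι' : B →ₐ[ℚ] A2 := aeval ![X 0, X 2]

lemma fst_τ₁ (r : A1) : (τ₁ r).1 = r := by
  have : (AlgHom.fst ℚ A1 A2).comp τ₁ = AlgHom.id ℚ A1 := by
    apply MvPolynomial.algHom_ext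
    intro i
    fin_cases i <;> simp [τ₁, fst_apply']
  simpa using congrArg (fun f => f r) this

lemma snd_τ₂ (r : A2) : (τ₂ r).2 = r := by
  have : (AlgHom.snd ℚ A1 A2).comp τ₂ = AlgHom.id ℚ A2 := by
    apply MvPolynomial.algHom_ext
    intro i
    fin_cases i <;> simp [τ₂, snd_apply']
  simpa using congrArg (fun f => f r) this

lemma π₂_snd_τ₁ (r : A1) : π₂ (τ₁ r).2 = π₁ r := by
  have : (π₂.comp ((AlgHom.snd ℚ A1 A2).comp τ₁)) = π₁ := by
    apply MvPolynomial.algHom_ext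
    intro i
    fin_cases i <;> simp [τ₁, π₁, π₂, snd_apply']
  simpa using congrArg (fun f => f r) this

lemma ι'_π₂ (r : A2) : ι' (π₂ r) = aeval ![X 0, 2 * X 2 - X 0 ^ 2, X 2, -X 2 * (X 0 ^ 2 - 4 * X 2)] r := by
  have : ι'.comp π₂ = aeval ![X 0, 2 * X 2 - X 0 ^ 2, X 2, -X 2 * (X 0 ^ 2 - 4 * X 2)] := by
    apply MvPolynomial.algHom_ext
    intro i
    fin_cases i <;> simp [ι', π₂, map_ofNat]
  simpa using congrArg (fun f => f r) this

/-- The fiber product `A = A₁ ×_B A₂` along `π₁` and `π₂` is generated as a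
ℚ-algebra by the five elements `(x, a)`, `(y, c)`, `(z, 0)`, `(2y − x², b)` and
`(−y(x² − 4y), d)`. -/
theorem stmt9 :
    Algebra.adjoin ℚ
        ({(X 0, X 0), (X 1, X 2), (X 2, 0), (2 * X 1 - X 0 ^ 2, X 1),
          (-X 1 * (X 0 ^ 2 - 4 * X 1), X 3)} : Set (A1 × A2)) =
      AlgHom.equalizer (π₁.comp (AlgHom.fst ℚ A1 A2)) (π₂.comp (AlgHom.snd ℚ A1 A2)) := by
  set S := Algebra.adjoin ℚ
        ({(X 0, X 0), (X 1, X 2), (X 2, 0), (2 * X 1 - X 0 ^ 2, X 1),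
          (-X 1 * (X 0 ^ 2 - 4 * X 1), X 3)} : Set (A1 × A2)) with hS
  -- generators of the adjoin are in S
  have hg1 : ((X 0, X 0) : A1 × A2) ∈ S := Algebra.subset_adjoin (by simp)
  have hg2 : ((X 1, X 2) : A1 × A2) ∈ S := Algebra.subset_adjoin (by simp)
  have hg3 : ((X 2, 0) : A1 × A2) ∈ S := Algebra.subset_adjoin (by simp)
  have hg4 : ((2 * X 1 - X 0 ^ 2, X 1) : A1 × A2) ∈ S := Algebra.subset_adjoin (by simp)
  have hg5 : ((-X 1 * (X 0 ^ 2 - 4 * X 1), X 3) : A1 × A2) ∈ S := Algebra.subset_adjoin (by simp)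
  have hg5' : ((-(X 1 * (X 0 ^ 2 - 4 * X 1)), X 3) : A1 × A2) ∈ S := by
    simpa [neg_mul] using hg5
  -- τ₁ lands in S
  have hτ₁ : ∀ r : A1, τ₁ r ∈ S := by
    intro r
    induction r using MvPolynomial.induction_on with
    | C a => simpa [τ₁] using S.algebraMap_mem a
    | add p q hp hq => simpa using S.add_mem hp hq
    | mul_X p i hp =>
      rw [map_mul]
      refine S.mul_mem hp ?_
      fin_cases i <;> simp [τ₁] <;> assumption
  have hτ₂ : ∀ r : A2, τ₂ r ∈ S := by
    intro r
    induction r using MvPolynomial.induction_on with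
    | C a => simpa [τ₂] using S.algebraMap_mem a
    | add p q hp hq => simpa using S.add_mem hp hq
    | mul_X p i hp =>
      rw [map_mul]
      refine S.mul_mem hp ?_
      fin_cases i <;> simp [τ₂] <;> assumption
  -- the two kernel generators
  set u : A2 := X 1 - (2 * X 2 - X 0 ^ 2) with hu
  set v : A2 := X 3 - (-X 2 * (X 0 ^ 2 - 4 * X 2)) with hv
  have hOu : ((0, u) : A1 × A2) ∈ S := by
    have h := S.sub_mem hg4 (hτ₁ (2 * X 1 - X 0 ^ 2))
    have hτ : τ₁ (2 * X 1 - X 0 ^ 2) = (2 * X 1 - X 0 ^ 2, 2 * X 2 - X 0 ^ 2) := by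
      simp [τ₁, Prod.ext_iff]
    rw [hτ] at h
    simpa [Prod.ext_iff, hu] using h
  have hOv : ((0, v) : A1 × A2) ∈ S := by
    have h := S.sub_mem hg5 (hτ₁ (-X 1 * (X 0 ^ 2 - 4 * X 1)))
    have hτ : τ₁ (-X 1 * (X 0 ^ 2 - 4 * X 1)) =
        (-X 1 * (X 0 ^ 2 - 4 * X 1), -X 2 * (X 0 ^ 2 - 4 * X 2)) := by
      simp [τ₁, Prod.ext_iff]
    rw [hτ] at h
    simpa [Prod.ext_iff, hv] using h
  -- {0} × span{u,v} ⊆ S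
  have hI : ∀ k ∈ Ideal.span ({u, v} : Set A2), ((0, k) : A1 × A2) ∈ S := by
    intro k hk
    induction hk using Submodule.span_induction with
    | mem x hx =>
      rcases hx with h | h
      · subst h; exact hOu
      · simp only [Set.mem_singleton_iff] at h; subst h; exact hOv
    | zero => exact S.zero_mem
    | add x y _ _ hx hy => simpa using S.add_mem hx hy
    | smul a x _ hx =>
      have hm := S.mul_mem (hτ₂ a) hx
      have h2 : τ₂ a * ((0, x) : A1 × A2) = (0, a * x) := by
        have := snd_τ₂ a
        simp [Prod.ext_iff, this]
      rw [h2] at hm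
      simpa [smul_eq_mul] using hm
  -- kernel of π₂ is contained in span{u,v}
  have hker : ∀ k : A2, π₂ k = 0 → k ∈ Ideal.span ({u, v} : Set A2) := by
    intro k hk
    set I := Ideal.span ({u, v} : Set A2) with hIdef
    set η : A2 →ₐ[ℚ] A2 := aeval ![X 0, 2 * X 2 - X 0 ^ 2, X 2, -X 2 * (X 0 ^ 2 - 4 * X 2)] with hη
    have hQ : (Ideal.Quotient.mkₐ ℚ I).comp η = Ideal.Quotient.mkₐ ℚ I := by
      apply MvPolynomial.algHom_ext
      intro i
      fin_cases i
      · simp [hη]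
      · simp only [AlgHom.comp_apply, Ideal.Quotient.mkₐ_eq_mk]
        rw [Ideal.Quotient.eq]
        show η (X (1 : Fin 4)) - X 1 ∈ I
        rw [show η (X (1 : Fin 4)) - X 1 = -u by simp [hη, hu]]
        exact neg_mem (Ideal.subset_span (Or.inl rfl))
      · simp [hη]
      · simp only [AlgHom.comp_apply, Ideal.Quotient.mkₐ_eq_mk]
        rw [Ideal.Quotient.eq]
        show η (X (3 : Fin 4)) - X 3 ∈ I
        rw [show η (X (3 : Fin 4)) - X 3 = -v by simp [hη, hv] <;> ring]
        exact neg_mem (Ideal.subset_span (Or.inr rfl))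
    have hk2 : η k = 0 := by
      have h := ι'_π₂ k
      rw [hk, map_zero] at h
      rw [hη]
      exact h.symm
    have h0 : Ideal.Quotient.mk I k = 0 := by
      have := congrArg (fun f => f k) hQ
      simp only [AlgHom.comp_apply, Ideal.Quotient.mkₐ_eq_mk, hk2, map_zero] at this
      exact this.symm ▸ rfl
    exact (Ideal.Quotient.eq_zero_iff_mem).mp h0
  apply le_antisymm
  · rw [hS]
    apply Algebra.adjoin_le
    intro x hx
    simp only [Set.mem_insert_iff, Set.mem_singleton_iff] at hx
    rcases hx with h | h | h | h | h <;> subst h <;>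
      · show _ = _
        simp [π₁, π₂, map_ofNat]
        try ring
  · rintro ⟨p, q⟩ hpq
    have hpq' : π₁ p = π₂ q := hpq
    have h1 : τ₁ p ∈ S := hτ₁ p
    have hk : π₂ (q - (τ₁ p).2) = 0 := by
      rw [map_sub, π₂_snd_τ₁, hpq', sub_self]
    have h2 : ((0, q - (τ₁ p).2) : A1 × A2) ∈ S := hI _ (hker _ hk)
    have := S.add_mem h1 h2
    have heq : τ₁ p + ((0, q - (τ₁ p).2) : A1 × A2) = (p, q) := by
      have := fst_τ₁ p
      simp [Prod.ext_iff, this]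
    rwa [heq] at this


end Stmt9
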